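/- For the four standard basis vectors e_1, e_2, e_3, e_4 of ℝ⁴, Σ_{k_1,k_2,k_3 ∈ {0,1}} ‖(−1)^{k_1} e_1 + (−1)^{k_2} e_2 + (−1)^{k_3} e_3 + e_4‖ = 16. Moreover, for any unit vectors b_1, b_2, b_3, b_4 in ℝ⁴, Σ_{k_1,k_2,k_3 ∈ {0,1}} ‖(−1)^{k_1} b_1 + (−1)^{k_2} b_2 + (−1)^{k_3} b_3 + b_4‖ ≤ 16. -/

import Mathlib

open RealInnerProductSpace

set_option maxHeartbeats 800000 in
theorem stmt19 :
    ((∑ s : Fin 2 × Fin 2 × Fin 2,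
        ‖((-1 : ℝ) ^ (s.1 : ℕ)) • EuclideanSpace.single (0 : Fin 4) (1 : ℝ) +
          ((-1 : ℝ) ^ (s.2.1 : ℕ)) • EuclideanSpace.single (1 : Fin 4) (1 : ℝ) +
          ((-1 : ℝ) ^ (s.2.2 : ℕ)) • EuclideanSpace.single (2 : Fin 4) (1 : ℝ) +
          EuclideanSpace.single (3 : Fin 4) (1 : ℝ)‖) = 16) ∧
    (∀ b : Fin 4 → EuclideanSpace ℝ (Fin 4), (∀ j, ‖b j‖ = 1) →
      (∑ s : Fin 2 × Fin 2 × Fin 2,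
        ‖((-1 : ℝ) ^ (s.1 : ℕ)) • b 0 + ((-1 : ℝ) ^ (s.2.1 : ℕ)) • b 1 +
          ((-1 : ℝ) ^ (s.2.2 : ℕ)) • b 2 + b 3‖) ≤ 16) := by
  constructor
  · have norm2 : ∀ x : EuclideanSpace ℝ (Fin 4), (∀ i, x i ^ 2 = 1) → ‖x‖ = 2 := by
      intro x hx
      rw [EuclideanSpace.norm_eq]
      simp only [Real.norm_eq_abs, sq_abs, Fin.sum_univ_four, hx]
      rw [show (1:ℝ)+1+1+1 = 2^2 by norm_num, Real.sqrt_sq (by norm_num)]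
    have key : ∀ s : Fin 2 × Fin 2 × Fin 2,
        ‖((-1 : ℝ) ^ (s.1 : ℕ)) • EuclideanSpace.single (0 : Fin 4) (1 : ℝ) +
          ((-1 : ℝ) ^ (s.2.1 : ℕ)) • EuclideanSpace.single (1 : Fin 4) (1 : ℝ) +
          ((-1 : ℝ) ^ (s.2.2 : ℕ)) • EuclideanSpace.single (2 : Fin 4) (1 : ℝ) +
          EuclideanSpace.single (3 : Fin 4) (1 : ℝ)‖ = 2 := by
      rintro ⟨a, b, c⟩
      fin_cases a <;> fin_cases b <;> fin_cases c <;>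
        (apply norm2; intro i; fin_cases i <;>
          norm_num [EuclideanSpace.single_apply, Fin.ext_iff, show ((3:Fin 4).val) = 3 from rfl])
    rw [Finset.sum_congr rfl (fun s _ => key s)]
    norm_num
  · intro b hb
    have h32 : (∑ s : Fin 2 × Fin 2 × Fin 2,
        ‖((-1 : ℝ) ^ (s.1 : ℕ)) • b 0 + ((-1 : ℝ) ^ (s.2.1 : ℕ)) • b 1 +
          ((-1 : ℝ) ^ (s.2.2 : ℕ)) • b 2 + b 3‖ ^ 2) = 32 := by
      have h : ∀ j, ⟪b j, b j⟫ = 1 := by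
        intro j; rw [real_inner_self_eq_norm_sq, hb]; norm_num
      simp only [Fin.sum_univ_succ, Fintype.sum_prod_type, Fin.sum_univ_zero]
      simp only [← real_inner_self_eq_norm_sq, inner_add_add_self, inner_add_left,
        inner_add_right, real_inner_smul_left, real_inner_smul_right]
      simp [h]
      ring_nf
      norm_num [hb]
    have hCS : (∑ s : Fin 2 × Fin 2 × Fin 2,
        ‖((-1 : ℝ) ^ (s.1 : ℕ)) • b 0 + ((-1 : ℝ) ^ (s.2.1 : ℕ)) • b 1 +
          ((-1 : ℝ) ^ (s.2.2 : ℕ)) • b 2 + b 3‖) ^ 2 ≤ 8 * 32 := by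
      rw [← h32]
      calc _ ≤ ((Finset.univ : Finset (Fin 2 × Fin 2 × Fin 2)).card : ℝ) *
            ∑ s : Fin 2 × Fin 2 × Fin 2,
              ‖((-1 : ℝ) ^ (s.1 : ℕ)) • b 0 + ((-1 : ℝ) ^ (s.2.1 : ℕ)) • b 1 +
                ((-1 : ℝ) ^ (s.2.2 : ℕ)) • b 2 + b 3‖ ^ 2 := sq_sum_le_card_mul_sum_sq
        _ = _ := by norm_num
    have hSnn : (0:ℝ) ≤ ∑ s : Fin 2 × Fin 2 × Fin 2,
        ‖((-1 : ℝ) ^ (s.1 : ℕ)) • b 0 + ((-1 : ℝ) ^ (s.2.1 : ℕ)) • b 1 +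
          ((-1 : ℝ) ^ (s.2.2 : ℕ)) • b 2 + b 3‖ :=
      Finset.sum_nonneg fun _ _ => norm_nonneg _
    nlinarith
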